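/- Let a be a real number and z a nonzero real number. Define c : ℕ → ℝ by c(0) = −1 and c(d+1) = (1/z)·c(d) − ∑_{j=0}^{d} (a·C(d,j) + C(d,j−1))·c(j), where C(d,−1) = 0. Then for every d ≥ 0, c(d) equals the negative of the d-th iterated derivative at 0 of the function g_{a,z}(x) = exp(1/z − a·x − (1/z)·e^{−x}). -/

import Mathlib

open ContDiff in
lemma myIterDeriv_add {f g : ℝ → ℝ} {n : ℕ} (hf : ContDiff ℝ ∞ f) (hg : ContDiff ℝ ∞ g)
    (x : ℝ) : iteratedDeriv n (fun y => f y + g y) x = iteratedDeriv n f x + iteratedDeriv n g x := by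
  simp_rw [← iteratedDerivWithin_univ]
  exact iteratedDerivWithin_add (Set.mem_univ x) uniqueDiffOn_univ
    ((hf.of_le (by exact_mod_cast (le_top : (n:ℕ∞) ≤ ⊤))).contDiffWithinAt)
    ((hg.of_le (by exact_mod_cast (le_top : (n:ℕ∞) ≤ ⊤))).contDiffWithinAt)

open ContDiff in
lemma myIterDeriv_sub {f g : ℝ → ℝ} {n : ℕ} (hf : ContDiff ℝ ∞ f) (hg : ContDiff ℝ ∞ g)
    (x : ℝ) : iteratedDeriv n (fun y => f y - g y) x = iteratedDeriv n f x - iteratedDeriv n g x := by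
  simp_rw [← iteratedDerivWithin_univ]
  exact iteratedDerivWithin_sub (Set.mem_univ x) uniqueDiffOn_univ
    ((hf.of_le (by exact_mod_cast (le_top : (n:ℕ∞) ≤ ⊤))).contDiffWithinAt)
    ((hg.of_le (by exact_mod_cast (le_top : (n:ℕ∞) ≤ ⊤))).contDiffWithinAt)

open ContDiff in
lemma myIterDeriv_cmul {f : ℝ → ℝ} {n : ℕ} (hf : ContDiff ℝ ∞ f) (k x : ℝ) :
    iteratedDeriv n (fun y => k * f y) x = k * iteratedDeriv n f x := by
  simp_rw [← iteratedDerivWithin_univ]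
  exact iteratedDerivWithin_const_mul (Set.mem_univ x) uniqueDiffOn_univ k
    ((hf.of_le (by exact_mod_cast (le_top : (n:ℕ∞) ≤ ⊤))).contDiffWithinAt)

lemma myPascal (d : ℕ) (u : ℕ → ℝ) :
    ∑ j ∈ Finset.range (d + 1), (d.choose j : ℝ) * (u j + u (j + 1)) =
    ∑ j ∈ Finset.range (d + 2), ((d + 1).choose j : ℝ) * u j := by
  have h1 : ∑ j ∈ Finset.range (d + 1), (d.choose j : ℝ) * u j
      = u 0 + ∑ j ∈ Finset.range (d + 1), (d.choose (j + 1) : ℝ) * u (j + 1) := by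
    rw [Finset.sum_range_succ' (fun j => (d.choose j : ℝ) * u j) d]
    rw [Finset.sum_range_succ (fun j => (d.choose (j + 1) : ℝ) * u (j + 1)) d]
    simp [Nat.choose_succ_self]
    ring
  simp_rw [mul_add, Finset.sum_add_distrib, h1]
  rw [Finset.sum_range_succ' (fun j => ((d + 1).choose j : ℝ) * u j) (d + 1)]
  rw [add_assoc, ← Finset.sum_add_distrib]
  have h2 : ∀ j ∈ Finset.range (d + 1),
      (d.choose (j + 1) : ℝ) * u (j + 1) + (d.choose j : ℝ) * u (j + 1)
      = ((d + 1).choose (j + 1) : ℝ) * u (j + 1) := by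
    intro j _
    rw [Nat.choose_succ_succ]
    push_cast
    ring
  rw [Finset.sum_congr rfl h2]
  simp [add_comm]

open ContDiff in
lemma myLeibnizExp (d : ℕ) : ∀ (g : ℝ → ℝ), ContDiff ℝ ∞ g → ∀ x : ℝ,
    iteratedDeriv d (fun y => Real.exp y * g y) x =
    ∑ j ∈ Finset.range (d + 1), (d.choose j : ℝ) * (Real.exp x * iteratedDeriv j g x) := by
  induction d with
  | zero => intro g hg x; simp
  | succ d ih =>
    intro g hg x
    have hg' : ContDiff ℝ ∞ (deriv g) := (contDiff_infty_iff_deriv.mp hg).2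
    have hderiv : deriv (fun y => Real.exp y * g y)
        = fun y => Real.exp y * (g y + deriv g y) := by
      funext y
      rw [deriv_fun_mul (Real.differentiable_exp y)
        ((hg.differentiable (by simp)) y), Real.deriv_exp]
      ring
    rw [iteratedDeriv_succ', hderiv, ih _ (hg.add hg') x]
    have key : ∀ j : ℕ, iteratedDeriv j (fun y => g y + deriv g y) x
        = iteratedDeriv j g x + iteratedDeriv (j + 1) g x := by
      intro j
      rw [myIterDeriv_add hg hg' x, iteratedDeriv_succ']
    calc ∑ j ∈ Finset.range (d + 1),
          (d.choose j : ℝ) * (Real.exp x * iteratedDeriv j (fun y => g y + deriv g y) x)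
        = ∑ j ∈ Finset.range (d + 1), (d.choose j : ℝ) *
            ((Real.exp x * iteratedDeriv j g x) + (Real.exp x * iteratedDeriv (j + 1) g x)) := by
          apply Finset.sum_congr rfl; intro j _; rw [key j]; ring
      _ = ∑ j ∈ Finset.range (d + 2), ((d + 1).choose j : ℝ) * (Real.exp x * iteratedDeriv j g x) :=
          myPascal d (fun j => Real.exp x * iteratedDeriv j g x)
open ContDiff

theorem stmt_10 (a z : ℝ) (hz : z ≠ 0) (c : ℕ → ℝ) (h0 : c 0 = -1)
    (hrec : ∀ d : ℕ, c (d + 1) =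
      (1 / z) * c d - ∑ j ∈ Finset.range (d + 1),
        (a * (Nat.choose d j : ℝ) + if j = 0 then 0 else (Nat.choose d (j - 1) : ℝ)) * c j) :
    ∀ d : ℕ, c d =
      -(iteratedDeriv d (fun x : ℝ => Real.exp (1 / z - a * x - (1 / z) * Real.exp (-x))) 0) := by
  set g : ℝ → ℝ := fun x => Real.exp (1 / z - a * x - (1 / z) * Real.exp (-x)) with hgdef
  set f : ℕ → ℝ := fun d => iteratedDeriv d g 0 with hfdef
  -- smoothness
  have hφ : ContDiff ℝ ∞ (fun x : ℝ => 1 / z - a * x - (1 / z) * Real.exp (-x)) := by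
    apply ContDiff.sub
    · exact (contDiff_const.sub (contDiff_const.mul contDiff_id))
    · exact contDiff_const.mul (Real.contDiff_exp.comp contDiff_id.neg)
  have hg : ContDiff ℝ ∞ g := Real.contDiff_exp.comp hφ
  have hg' : ContDiff ℝ ∞ (deriv g) := (contDiff_infty_iff_deriv.mp hg).2
  -- derivative of g
  have hGd : ∀ x : ℝ, HasDerivAt g (g x * (-a + (1 / z) * Real.exp (-x))) x := by
    intro x
    have h1 : HasDerivAt (fun x : ℝ => Real.exp (-x)) (-Real.exp (-x)) x := by
      simpa using (hasDerivAt_neg x).exp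
    have h2 : HasDerivAt (fun x : ℝ => 1 / z - a * x - (1 / z) * Real.exp (-x))
        (-a + (1 / z) * Real.exp (-x)) x := by
      have := ((hasDerivAt_const x (1 / z)).sub ((hasDerivAt_id x).const_mul a)).sub
        (h1.const_mul (1 / z))
      exact this.congr_deriv (by ring)
    exact h2.exp
  -- functional equation
  have hfun : (fun x : ℝ => Real.exp x * deriv g x)
      = fun x : ℝ => (1 / z) * g x - a * (Real.exp x * g x) := by
    funext x
    have hee : Real.exp x * Real.exp (-x) = 1 := by
      rw [← Real.exp_add]; simp
    calc Real.exp x * deriv g x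
        = Real.exp x * (g x * (-a + (1 / z) * Real.exp (-x))) := by rw [(hGd x).deriv]
      _ = -a * (Real.exp x * g x) + (1 / z) * ((Real.exp x * Real.exp (-x)) * g x) := by ring
      _ = (1 / z) * g x - a * (Real.exp x * g x) := by rw [hee]; ring
  -- recurrence for f
  have hf_rec : ∀ d : ℕ, f (d + 1) =
      (1 / z) * f d - ∑ j ∈ Finset.range (d + 1),
        (a * (Nat.choose d j : ℝ) + if j = 0 then 0 else (Nat.choose d (j - 1) : ℝ)) * f j := by
    intro d
    have hL : iteratedDeriv d (fun x : ℝ => Real.exp x * deriv g x) 0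
        = ∑ j ∈ Finset.range (d + 1), (d.choose j : ℝ) * f (j + 1) := by
      rw [myLeibnizExp d (deriv g) hg' 0]
      apply Finset.sum_congr rfl
      intro j _
      rw [Real.exp_zero, one_mul, ← iteratedDeriv_succ']
    have hR : iteratedDeriv d (fun x : ℝ => (1 / z) * g x - a * (Real.exp x * g x)) 0
        = (1 / z) * f d - a * ∑ j ∈ Finset.range (d + 1), (d.choose j : ℝ) * f j := by
      have hexg : ContDiff ℝ ∞ (fun x : ℝ => Real.exp x * g x) :=
        Real.contDiff_exp.mul hg
      rw [myIterDeriv_sub (contDiff_const.mul hg) (contDiff_const.mul hexg) 0,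
        myIterDeriv_cmul hg (1 / z) 0, myIterDeriv_cmul hexg a 0,
        myLeibnizExp d g hg 0]
      simp [Real.exp_zero]
      rfl
    have heq : ∑ j ∈ Finset.range (d + 1), (d.choose j : ℝ) * f (j + 1)
        = (1 / z) * f d - a * ∑ j ∈ Finset.range (d + 1), (d.choose j : ℝ) * f j := by
      rw [← hL, ← hR, hfun]
    -- extract top term
    have hsplit : ∑ j ∈ Finset.range (d + 1), (d.choose j : ℝ) * f (j + 1)
        = f (d + 1) + ∑ j ∈ Finset.range (d + 1),
            (if j = 0 then 0 else (Nat.choose d (j - 1) : ℝ)) * f j := by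
      rw [Finset.sum_range_succ (fun j => (d.choose j : ℝ) * f (j + 1)) d,
        Finset.sum_range_succ' (fun j =>
          (if j = 0 then (0:ℝ) else (Nat.choose d (j - 1) : ℝ)) * f j) d]
      simp [add_comm]
    have := heq
    rw [hsplit] at this
    rw [Finset.sum_congr rfl (fun j _ => by ring :
      ∀ j ∈ Finset.range (d + 1),
        (a * (Nat.choose d j : ℝ) + if j = 0 then 0 else (Nat.choose d (j - 1) : ℝ)) * f j
        = a * ((d.choose j : ℝ) * f j)
          + (if j = 0 then 0 else (Nat.choose d (j - 1) : ℝ)) * f j),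
      Finset.sum_add_distrib, ← Finset.mul_sum]
    linarith [this]
  -- strong induction
  intro d
  induction d using Nat.strong_induction_on with
  | _ d ih =>
    match d with
    | 0 =>
      have : g 0 = 1 := by
        have : (1 / z - a * 0 - (1 / z) * Real.exp (-(0:ℝ))) = 0 := by
          simp
        simp only [hgdef]
        rw [show (1 / z - a * 0 - 1 / z * Real.exp (-(0:ℝ))) = 0 from this, Real.exp_zero]
      simp [h0, iteratedDeriv_zero, this]
    | Nat.succ d =>
      have hsum : ∑ j ∈ Finset.range (d + 1),
          (a * (Nat.choose d j : ℝ) + if j = 0 then 0 else (Nat.choose d (j - 1) : ℝ)) * c j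
          = -∑ j ∈ Finset.range (d + 1),
            (a * (Nat.choose d j : ℝ) + if j = 0 then 0 else (Nat.choose d (j - 1) : ℝ)) * f j := by
        rw [← Finset.sum_neg_distrib]
        apply Finset.sum_congr rfl
        intro j hj
        rw [ih j (Finset.mem_range.mp hj)]
        ring
      rw [hrec d, hsum, ih d (Nat.lt_succ_self d)]
      have hfd1 : iteratedDeriv d.succ g 0 = f (d + 1) := rfl
      have hfd : iteratedDeriv d g 0 = f d := rfl
      rw [hfd1, hfd, hf_rec d]
      ring
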